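/- arXiv:1609.03549 — 2 statements merged into one kernel-verified Lean document; each statement's English description precedes it below -/
import Mathlib

section
/- The decomposition coproduct Γ is an algebra morphism for the quasi-shuffle product: Γ(w' ⧢ w'') = Γ(w') ⧢ Γ(w'') for all words w', w'', where the product on the tensor square is componentwise quasi-shuffle. -/
/-- The quasi-shuffle product of two words over a commutative semigroup `Ω`. -/
noncomputable def qsh {Ω : Type*} [AddCommSemigroup Ω] :
    List Ω → List Ω → (List Ω →₀ ℤ)
  | [], w => Finsupp.single w 1
  | a :: w', [] => Finsupp.single (a :: w') 1
  | a :: w', b :: w'' =>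
      Finsupp.mapDomain (a :: ·) (qsh w' (b :: w''))
    + Finsupp.mapDomain (b :: ·) (qsh (a :: w') w'')
    + Finsupp.mapDomain ((a + b) :: ·) (qsh w' w'')
  termination_by w₁ w₂ => w₁.length + w₂.length

/-- Weight of a word (junk default value for the empty word). -/
def wt {Ω : Type*} [AddCommSemigroup Ω] [Inhabited Ω] : List Ω → Ω
  | [] => default
  | a :: l => l.foldl (· + ·) a

/-- Iterated quasi-shuffle `w¹ ⧢ ⋯ ⧢ wˢ` of a list of words. -/
noncomputable def qshFold {Ω : Type*} [AddCommSemigroup Ω] :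
    List (List Ω) → (List Ω →₀ ℤ)
  | [] => Finsupp.single [] 1
  | u :: rest => (qshFold rest).sum fun v c => c • qsh u v

/-- The decomposition coproduct
`Γ(w) = ∑_{s≥1} ∑_{w = w¹.⋯.wˢ} ‖w¹‖⋯‖wˢ‖ ⊗ (w¹ ⧢ ⋯ ⧢ wˢ)`, the sum running
over decompositions of `w` into nonempty words; the tensor square of the free
module on words is modelled as the free module on pairs of words. -/
noncomputable def Gam {Ω : Type*} [AddCommSemigroup Ω] [Inhabited Ω]
    (w : List Ω) : (List Ω × List Ω) →₀ ℤ :=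
  ∑ c : Composition w.length,
    Finsupp.mapDomain (fun v => ((w.splitWrtComposition c).map wt, v))
      (qshFold (w.splitWrtComposition c))

/-- The tensor product `x ⊗ y` of two elements of the free module on words,
as an element of the free module on pairs of words. -/
noncomputable def tens {Ω : Type*} (x y : List Ω →₀ ℤ) : (List Ω × List Ω) →₀ ℤ :=
  x.sum fun a ca => y.sum fun b cb => Finsupp.single (a, b) (ca * cb)

open Finsupp

/-- linear extension of `f` -/
noncomputable abbrev lc {α : Type*} {N : Type*} [AddCommMonoid N] [Module ℤ N]
    (f : α → N) : (α →₀ ℤ) →ₗ[ℤ] N := Finsupp.linearCombination ℤ f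

section generic
variable {α β : Type*} {N P : Type*} [AddCommMonoid N] [Module ℤ N]
  [AddCommMonoid P] [Module ℤ P]

lemma lc_single (f : α → N) (a : α) (c : ℤ) : lc f (single a c) = c • f a :=
  Finsupp.linearCombination_single ℤ c a

lemma lc_map (f : β → N) (g : α → β) (z : α →₀ ℤ) :
    lc f (mapDomain g z) = lc (fun a => f (g a)) z :=
  Finsupp.linearCombination_mapDomain ℤ g z

lemma lc_zero_fun (z : α →₀ ℤ) : lc (fun _ => (0:N)) z = 0 := by
  simp [Finsupp.linearCombination_apply, Finsupp.sum]

lemma lc_add_fun (f g : α → N) (z : α →₀ ℤ) :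
    lc (fun a => f a + g a) z = lc f z + lc g z := by
  simp [Finsupp.linearCombination_apply, smul_add, Finsupp.sum_add]

lemma lc_smul_fun (f : α → N) (c : ℤ) (z : α →₀ ℤ) :
    lc (fun a => c • f a) z = c • lc f z := by
  classical
  induction z using Finsupp.induction_linear with
  | zero => simp
  | add x y hx hy => rw [map_add, hx, hy, map_add, smul_add]
  | single a b => rw [lc_single, lc_single, smul_comm]

lemma lc_id (z : α →₀ ℤ) : lc (fun a => single a (1:ℤ)) z = z := by
  induction z using Finsupp.induction_linear with
  | zero => simp
  | add x y hx hy => rw [map_add, hx, hy]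
  | single a b => rw [lc_single, Finsupp.smul_single, smul_eq_mul, mul_one]

lemma lc_map_single (g : α → β) (z : α →₀ ℤ) :
    lc (fun a => single (g a) (1:ℤ)) z = mapDomain g z := by
  induction z using Finsupp.induction_linear with
  | zero => simp
  | add x y hx hy => simp [map_add, hx, hy, mapDomain_add]
  | single a b => simp [lc_single, Finsupp.smul_single, mapDomain_single]

lemma map_lc (φ : N →ₗ[ℤ] P) (f : α → N) (z : α →₀ ℤ) :
    φ (lc f z) = lc (fun a => φ (f a)) z := by
  rw [Finsupp.apply_linearCombination]; rfl

lemma mapDomain_lc {γ δ : Type*} (g : γ → δ) (f : α → γ →₀ ℤ) (z : α →₀ ℤ) :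
    mapDomain g (lc f z) = lc (fun a => mapDomain g (f a)) z := by
  have := map_lc (Finsupp.lmapDomain ℤ ℤ g) f z
  simpa using this

lemma lc_lc_swap (F : α → β → N) (x : α →₀ ℤ) (y : β →₀ ℤ) :
    lc (fun a => lc (F a) y) x = lc (fun b => lc (fun a => F a b) x) y := by
  induction x using Finsupp.induction_linear with
  | zero => simp [lc_zero_fun]
  | add x₁ x₂ h1 h2 =>
      rw [map_add, h1, h2, ← lc_add_fun]
      simp [map_add]
  | single a c =>
      rw [lc_single, ← lc_smul_fun]
      simp [lc_single]

lemma lc_congr {f g : α → N} {z : α →₀ ℤ} (h : ∀ a ∈ z.support, f a = g a) :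
    lc f z = lc g z := by
  rw [Finsupp.linearCombination_apply, Finsupp.linearCombination_apply]
  exact Finsupp.sum_congr fun a ha => by rw [h a ha]

lemma mem_single_support' {α : Type*} {c v : α} (h : c ∈ (Finsupp.single v (1:ℤ)).support) :
    c = v := by
  have := Finsupp.support_single_subset h
  simpa using this

lemma lc_sum_eq (f : α → N) (z : α →₀ ℤ) : z.sum (fun a c => c • f a) = lc f z :=
  (Finsupp.linearCombination_apply ℤ z).symm
end generic
section qshbasic
variable {Ω : Type*} [AddCommSemigroup Ω]

lemma qsh_nil_left (w : List Ω) : qsh [] w = single w 1 := by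
  cases w <;> rw [qsh]

lemma qsh_nil_right (w : List Ω) : qsh w [] = single w 1 := by
  cases w <;> rw [qsh]

lemma qsh_cons (a b : Ω) (u v : List Ω) :
    qsh (a::u) (b::v) = mapDomain (a :: ·) (qsh u (b::v))
      + mapDomain (b :: ·) (qsh (a::u) v)
      + mapDomain ((a + b) :: ·) (qsh u v) := by
  rw [qsh]

lemma qsh_comm : ∀ (u v : List Ω), qsh u v = qsh v u
  | [], v => by rw [qsh_nil_left, qsh_nil_right]
  | (a::u), [] => by rw [qsh_nil_left, qsh_nil_right]
  | (a::u), (b::v) => by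
      rw [qsh_cons a b u v, qsh_cons b a v u,
        qsh_comm u (b::v), qsh_comm (a::u) v, qsh_comm u v, add_comm b a]
      abel
  termination_by u v => u.length + v.length

/-- expansion of `x ↦ x ⧢ (c::w)` over a cons-pushforward -/
lemma lc_qshW_mapCons (x : Ω) (z : List Ω →₀ ℤ) (c : Ω) (w : List Ω) :
    lc (fun t : List Ω => qsh t (c::w)) (mapDomain (x :: ·) z)
      = mapDomain (x :: ·) (lc (fun t => qsh t (c::w)) z)
      + mapDomain (c :: ·) (lc (fun t => qsh (x::t) w) z)
      + mapDomain ((x+c) :: ·) (lc (fun t => qsh t w) z) := by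
  rw [lc_map]
  simp only [qsh_cons]
  simp only [lc_add_fun, ← mapDomain_lc]

/-- expansion of `t ↦ (a::u) ⧢ t` over a cons-pushforward -/
lemma lc_qshU_mapCons (a : Ω) (u : List Ω) (y : Ω) (z : List Ω →₀ ℤ) :
    lc (fun t : List Ω => qsh (a::u) t) (mapDomain (y :: ·) z)
      = mapDomain (a :: ·) (lc (fun t => qsh u (y::t)) z)
      + mapDomain (y :: ·) (lc (fun t => qsh (a::u) t) z)
      + mapDomain ((a+y) :: ·) (lc (fun t => qsh u t) z) := by
  rw [lc_map]
  simp only [qsh_cons]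
  simp only [lc_add_fun, ← mapDomain_lc]

omit [AddCommSemigroup Ω] in
lemma lc_single_one (f : List Ω → List Ω →₀ ℤ) (v : List Ω) :
    lc f (single v (1:ℤ)) = f v := by rw [lc_single, one_smul]

set_option maxHeartbeats 2000000 in
lemma qsh_assoc : ∀ (u v w : List Ω),
    lc (fun x => qsh x w) (qsh u v) = lc (fun t => qsh u t) (qsh v w)
  | [], v, w => by
      rw [qsh_nil_left, lc_single_one]
      have h : (fun t : List Ω => qsh [] t) = fun t => single t 1 :=
        funext qsh_nil_left
      rw [h, lc_id]
  | (a::u), [], w => by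
      rw [qsh_nil_right, lc_single_one, qsh_nil_left, lc_single_one]
  | (a::u), (b::v), [] => by
      have h : (fun x : List Ω => qsh x []) = fun x => single x 1 :=
        funext qsh_nil_right
      rw [h, lc_id, qsh_nil_right, lc_single_one]
  | (a::u), (b::v), (c::w) => by
      have IH1 := qsh_assoc u (b::v) (c::w)
      have IH2 := qsh_assoc (a::u) v (c::w)
      have IH3 := qsh_assoc u v (c::w)
      have IH4 := qsh_assoc u (b::v) w
      have IH5 := qsh_assoc (a::u) v w
      have IH6 := qsh_assoc u v w
      have IH7 := qsh_assoc (a::u) (b::v) w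
      rw [qsh_cons a b u v]
      simp only [map_add]
      rw [lc_qshW_mapCons, lc_qshW_mapCons, lc_qshW_mapCons, qsh_cons b c v w]
      simp only [map_add]
      rw [lc_qshU_mapCons, lc_qshU_mapCons, lc_qshU_mapCons,
        IH2, IH3, IH4, IH5, IH6, ← IH7, qsh_cons a b u v]
      simp only [map_add, lc_map]
      rw [IH1, qsh_cons b c v w]
      simp only [map_add, lc_map, mapDomain_add]
      ac_rfl
  termination_by u v w => u.length + v.length + w.length

end qshbasic
section wt
variable {Ω : Type*} [AddCommSemigroup Ω] [Inhabited Ω]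

lemma mem_mapDomain_cons {x : Ω} {z : List Ω →₀ ℤ} {c : List Ω}
    (h : c ∈ (mapDomain (x :: ·) z).support) :
    ∃ y ∈ z.support, c = x :: y := by
  classical
  have := Finsupp.mapDomain_support h
  rcases Finset.mem_image.1 this with ⟨y, hy, rfl⟩
  exact ⟨y, hy, rfl⟩

lemma qsh_cons_cons_support {a b : Ω} {u v : List Ω} {z : List Ω}
    (h : z ∈ (qsh (a::u) (b::v)).support) :
    (∃ y ∈ (qsh u (b::v)).support, z = a :: y)
    ∨ (∃ y ∈ (qsh (a::u) v).support, z = b :: y)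
    ∨ (∃ y ∈ (qsh u v).support, z = (a+b) :: y) := by
  classical
  rw [qsh_cons] at h
  have h1 := Finsupp.support_add h
  rcases Finset.mem_union.1 h1 with h2 | h2
  · rcases Finset.mem_union.1 (Finsupp.support_add h2) with h3 | h3
    · exact Or.inl (mem_mapDomain_cons h3)
    · exact Or.inr (Or.inl (mem_mapDomain_cons h3))
  · exact Or.inr (Or.inr (mem_mapDomain_cons h2))

lemma mem_single_support {c v : List Ω} (h : c ∈ (single v (1:ℤ)).support) :
    c = v := by
  have := Finsupp.support_single_subset h
  simpa using this

lemma qsh_support_ne_nil_right {u v : List Ω} (hv : v ≠ []) :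
    ∀ z ∈ (qsh u v).support, z ≠ [] := by
  intro z hz
  cases u with
  | nil => rw [qsh_nil_left] at hz; rw [mem_single_support hz]; exact hv
  | cons a u =>
    cases v with
    | nil => exact absurd rfl hv
    | cons b v =>
      rcases qsh_cons_cons_support hz with ⟨y,_,rfl⟩|⟨y,_,rfl⟩|⟨y,_,rfl⟩ <;>
        simp

lemma qsh_support_ne_nil_left {u v : List Ω} (hu : u ≠ []) :
    ∀ z ∈ (qsh u v).support, z ≠ [] := by
  intro z hz
  rw [qsh_comm] at hz
  exact qsh_support_ne_nil_right hu z hz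

lemma foldl_add (l : List Ω) : ∀ a x : Ω, l.foldl (· + ·) (a + x) = a + l.foldl (· + ·) x := by
  induction l with
  | nil => intro a x; rfl
  | cons b m ih =>
      intro a x
      show m.foldl (· + ·) (a + x + b) = a + m.foldl (· + ·) (x + b)
      rw [add_assoc, ih]

lemma wt_cons (a : Ω) (l : List Ω) (h : l ≠ []) : wt (a :: l) = a + wt l := by
  cases l with
  | nil => exact absurd rfl h
  | cons b m =>
      show (b :: m).foldl (· + ·) a = a + wt (b :: m)
      show m.foldl (· + ·) (a + b) = a + m.foldl (· + ·) b
      rw [foldl_add]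

lemma wt_singleton (a : Ω) : wt [a] = a := rfl

lemma wt_qsh : ∀ (u v : List Ω), u ≠ [] → v ≠ [] →
    ∀ z ∈ (qsh u v).support, wt z = wt u + wt v
  | [], _, hu, _ => absurd rfl hu
  | (a::u), [], _, hv => absurd rfl hv
  | (a::u), (b::v), _, _ => by
      intro z hz
      rcases qsh_cons_cons_support hz with ⟨y,hy,rfl⟩|⟨y,hy,rfl⟩|⟨y,hy,rfl⟩
      · cases u with
        | nil =>
            rw [qsh_nil_left] at hy
            rw [mem_single_support hy, wt_cons a _ (by simp), wt_singleton]
        | cons u0 us =>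
            have hynil := qsh_support_ne_nil_right (by simp) y hy
            have ih := wt_qsh (u0::us) (b::v) (by simp) (by simp) y hy
            rw [wt_cons a y hynil, ih, wt_cons a (u0::us) (by simp), add_assoc]
      · cases v with
        | nil =>
            rw [qsh_nil_right] at hy
            rw [mem_single_support hy, wt_cons b _ (by simp), wt_singleton,
              add_comm]
        | cons v0 vs =>
            have hynil := qsh_support_ne_nil_left (by simp) y hy
            have ih := wt_qsh (a::u) (v0::vs) (by simp) (by simp) y hy
            rw [wt_cons b y hynil, ih, wt_cons b (v0::vs) (by simp),
              add_left_comm]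
      · match u, v, hy with
        | [], [], hy =>
            rw [qsh_nil_left] at hy
            rw [mem_single_support hy, wt_singleton, wt_singleton, wt_singleton]
        | [], (v0::vs), hy =>
            rw [qsh_nil_left] at hy
            rw [mem_single_support hy, wt_cons _ _ (by simp), wt_singleton,
              wt_cons b (v0::vs) (by simp), add_assoc]
        | (u0::us), [], hy =>
            rw [qsh_nil_right] at hy
            rw [mem_single_support hy, wt_cons _ _ (by simp), wt_singleton,
              wt_cons a (u0::us) (by simp), add_right_comm]
        | (u0::us), (v0::vs), hy =>
            have hynil := qsh_support_ne_nil_right (by simp) y hy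
            have ih := wt_qsh (u0::us) (v0::vs) (by simp) (by simp) y hy
            rw [wt_cons _ y hynil, ih, wt_cons a (u0::us) (by simp),
              wt_cons b (v0::vs) (by simp), add_add_add_comm]
  termination_by u v => u.length + v.length

end wt
section gam
variable {Ω : Type*} [AddCommSemigroup Ω] [Inhabited Ω]

lemma cons_headI_tail {l : List ℕ} (h : l ≠ []) : l.headI :: l.tail = l := by
  cases l with
  | nil => exact absurd rfl h
  | cons a l => rfl

lemma comp_blocks_ne_nil {n : ℕ} (c : Composition (n+1)) : c.blocks ≠ [] := by
  intro h
  have := c.blocks_sum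
  rw [h] at this
  simp at this

lemma comp_headI_pos {n : ℕ} (c : Composition (n+1)) : 0 < c.blocks.headI := by
  apply c.blocks_pos
  rw [← cons_headI_tail (comp_blocks_ne_nil c)]
  exact List.mem_cons_self

lemma comp_headI_le {n : ℕ} (c : Composition (n+1)) : c.blocks.headI ≤ n+1 := by
  have hs := c.blocks_sum
  rw [← cons_headI_tail (comp_blocks_ne_nil c), List.sum_cons] at hs
  omega

lemma comp_tail_sum {n : ℕ} (c : Composition (n+1)) :
    c.blocks.tail.sum = n + 1 - c.blocks.headI := by
  have hs := c.blocks_sum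
  rw [← cons_headI_tail (comp_blocks_ne_nil c), List.sum_cons] at hs
  omega

/-- decompose a composition of `t.length+1` into its first block size and rest -/
def gamEquiv (t : List Ω) :
    Composition (t.length + 1) ≃ Σ i : Fin (t.length + 1), Composition ((t.drop i.1).length) where
  toFun c := ⟨⟨c.blocks.headI - 1, by
      have h1 := comp_headI_pos c; have h2 := comp_headI_le c; omega⟩,
    ⟨c.blocks.tail,
     fun hj => c.blocks_pos (List.mem_of_mem_tail hj),
     by
      show c.blocks.tail.sum = (t.drop (c.blocks.headI - 1)).length
      rw [List.length_drop]
      have h1 := comp_headI_pos c; have h2 := comp_headI_le c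
      have h3 := comp_tail_sum c
      omega⟩⟩
  invFun x := ⟨(x.1.1 + 1) :: x.2.blocks, by
      intro i hi
      rcases List.mem_cons.1 hi with rfl | h
      · omega
      · exact x.2.blocks_pos h, by
      rw [List.sum_cons, x.2.blocks_sum, List.length_drop]
      have := x.1.2
      omega⟩
  left_inv c := by
    apply Composition.ext
    show (c.blocks.headI - 1 + 1) :: c.blocks.tail = c.blocks
    have h1 := comp_headI_pos c
    rw [Nat.sub_add_cancel h1]
    exact cons_headI_tail (comp_blocks_ne_nil c)
  right_inv x := rfl

lemma qshFold_cons (b : List Ω) (rest : List (List Ω)) :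
    qshFold (b :: rest) = lc (fun v => qsh b v) (qshFold rest) := by
  rw [qshFold]
  exact lc_sum_eq _ _

lemma Gam_nil : Gam ([] : List Ω) = single ([], []) 1 := by
  rw [Gam]
  have hb : ∀ c : Composition (List.length ([] : List Ω)), c.blocks = [] := by
    intro c
    have hs := c.blocks_sum
    cases h : c.blocks with
    | nil => rfl
    | cons n l =>
        exfalso
        have hp : 0 < n := c.blocks_pos (h ▸ (List.mem_cons_self : n ∈ n :: l))
        rw [h, List.sum_cons] at hs
        simp at hs
        omega
  have hsp : ∀ c : Composition (List.length ([] : List Ω)),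
      ([] : List Ω).splitWrtComposition c = [] := by
    intro c
    show List.splitWrtCompositionAux [] c.blocks = []
    rw [hb c]
    rfl
  have key : ∀ c : Composition (List.length ([] : List Ω)),
      mapDomain (fun v => ((([]: List Ω).splitWrtComposition c).map wt, v))
          (qshFold (([]: List Ω).splitWrtComposition c))
        = single (([],[]) : List Ω × List Ω) 1 := by
    intro c
    rw [hsp c, show qshFold ([] : List (List Ω)) = single ([] : List Ω) 1 from by rw [qshFold],
      mapDomain_single]
    rfl
  rw [Finset.sum_congr rfl fun c _ => key c, Finset.sum_const, Finset.card_univ]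
  have hcard : Fintype.card (Composition (List.length ([] : List Ω))) = 1 := by
    rw [show List.length ([] : List Ω) = 0 from rfl, composition_card]
    rfl
  rw [hcard, one_smul]

/-- the `muf b` function: absorb block `b` into a tensor basis element -/
noncomputable def muf (b : List Ω) (p : List Ω × List Ω) : (List Ω × List Ω) →₀ ℤ :=
  mapDomain (fun u => (wt b :: p.1, u)) (qsh b p.2)

lemma Gam_cons (a : Ω) (t : List Ω) :
    Gam (a :: t) = ∑ i ∈ Finset.range (t.length + 1),
      lc (muf (a :: t.take i)) (Gam (t.drop i)) := by
  classical
  rw [← Fin.sum_univ_eq_sum_range]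
  have hR : ∀ i : Fin (t.length + 1),
      lc (muf (a :: t.take i.1)) (Gam (t.drop i.1))
        = ∑ c : Composition ((t.drop i.1).length),
            lc (fun v => muf (a :: t.take i.1) (((t.drop i.1).splitWrtComposition c).map wt, v))
              (qshFold ((t.drop i.1).splitWrtComposition c)) := by
    intro i
    rw [Gam, map_sum]
    exact Finset.sum_congr rfl fun c _ => by rw [lc_map]
  simp only [hR]
  rw [Finset.sum_sigma', Finset.univ_sigma_univ]
  rw [Gam]
  refine (Finset.sum_equiv (gamEquiv t).symm (by simp) ?_).symm
  rintro ⟨i, c⟩ -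
  have hsplit : (a :: t).splitWrtComposition ((gamEquiv t).symm ⟨i, c⟩)
      = (a :: t.take i.1) :: (t.drop i.1).splitWrtComposition c := by
    show List.splitWrtCompositionAux (a :: t) ((i.1 + 1) :: c.blocks) = _
    rw [List.splitWrtCompositionAux]
    simp [List.splitAt_eq, List.take_succ_cons, List.drop_succ_cons]
    rfl
  rw [hsplit, qshFold_cons, mapDomain_lc]
  rfl

end gam
section bilin
variable {Ω : Type*} [AddCommSemigroup Ω] [Inhabited Ω]

lemma tens_eq (x y : List Ω →₀ ℤ) :
    tens x y = lc (fun a => lc (fun c => single ((a, c) : List Ω × List Ω) (1:ℤ)) y) x := by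
  rw [tens, Finsupp.linearCombination_apply]
  refine Finsupp.sum_congr fun a _ => ?_
  rw [Finsupp.linearCombination_apply, Finsupp.smul_sum]
  refine Finsupp.sum_congr fun b _ => ?_
  rw [Finsupp.smul_single, Finsupp.smul_single, smul_eq_mul, smul_eq_mul, mul_one]

lemma tens_single_left (s : List Ω) (Z : List Ω →₀ ℤ) :
    tens (single s (1:ℤ)) Z = mapDomain (fun u => (s, u)) Z := by
  rw [tens_eq, lc_single, one_smul, lc_map_single]

lemma tens_single_single (s s' : List Ω) :
    tens (single s (1:ℤ)) (single s' (1:ℤ)) = single ((s, s') : List Ω × List Ω) 1 := by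
  rw [tens_single_left, mapDomain_single]

lemma tens_lc_left {α : Type*} (f : α → List Ω →₀ ℤ) (z : α →₀ ℤ) (Q : List Ω →₀ ℤ) :
    tens (lc f z) Q = lc (fun a => tens (f a) Q) z := by
  rw [tens_eq, map_lc]
  simp only [← tens_eq]

lemma tens_lc_right {α : Type*} (Q : List Ω →₀ ℤ) (f : α → List Ω →₀ ℤ) (z : α →₀ ℤ) :
    tens Q (lc f z) = lc (fun a => tens Q (f a)) z := by
  rw [tens_eq]
  simp only [map_lc]
  rw [lc_lc_swap]
  simp only [← tens_eq]

lemma tens_add_left (x₁ x₂ y : List Ω →₀ ℤ) :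
    tens (x₁ + x₂) y = tens x₁ y + tens x₂ y := by
  rw [tens_eq, tens_eq, tens_eq, map_add]

lemma tens_map_fst (x : Ω) (P Q : List Ω →₀ ℤ) :
    mapDomain (fun u : List Ω × List Ω => ((x :: u.1, u.2) : List Ω × List Ω)) (tens P Q)
      = tens (mapDomain (x :: ·) P) Q := by
  rw [tens_eq, mapDomain_lc, tens_eq, lc_map]
  apply lc_congr
  intro a _
  rw [mapDomain_lc]
  apply lc_congr
  intro c _
  rw [mapDomain_single]

/-- the bilinear quasi-shuffle product -/
noncomputable def qm (x y : List Ω →₀ ℤ) : List Ω →₀ ℤ :=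
  lc (fun u => lc (fun v => qsh u v) y) x

lemma qm_single_left (u : List Ω) (y : List Ω →₀ ℤ) :
    qm (single u (1:ℤ)) y = lc (fun v => qsh u v) y := by
  rw [qm, lc_single, one_smul]

lemma qm_single_right (x : List Ω →₀ ℤ) (v : List Ω) :
    qm x (single v (1:ℤ)) = lc (fun u => qsh u v) x := by
  rw [qm]
  simp only [lc_single, one_smul]

lemma qm_single_single (u v : List Ω) :
    qm (single u (1:ℤ)) (single v (1:ℤ)) = qsh u v := by
  rw [qm_single_left, lc_single, one_smul]

lemma qm_assoc_single (u v t : List Ω) :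
    qm (qsh u v) (single t (1:ℤ)) = qm (single u (1:ℤ)) (qsh v t) := by
  rw [qm_single_right, qm_single_left]
  exact qsh_assoc u v t

lemma qm_add_left (x₁ x₂ y : List Ω →₀ ℤ) : qm (x₁ + x₂) y = qm x₁ y + qm x₂ y := by
  rw [qm, map_add]; rfl

lemma qm_add_right (x y₁ y₂ : List Ω →₀ ℤ) : qm x (y₁ + y₂) = qm x y₁ + qm x y₂ := by
  rw [qm]
  simp only [map_add, lc_add_fun]
  rfl

lemma qm_smul_left (c : ℤ) (x y : List Ω →₀ ℤ) : qm (c • x) y = c • qm x y := by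
  rw [qm, map_smul]; rfl

lemma qm_smul_right (c : ℤ) (x y : List Ω →₀ ℤ) : qm x (c • y) = c • qm x y := by
  rw [qm]
  simp only [map_smul, lc_smul_fun]
  rfl

lemma qm_zero_left (y : List Ω →₀ ℤ) : qm 0 y = 0 := by rw [qm, map_zero]
lemma qm_zero_right (x : List Ω →₀ ℤ) : qm x 0 = 0 := by
  rw [qm]
  simp only [map_zero]
  exact lc_zero_fun x

lemma qm_comm (x y : List Ω →₀ ℤ) : qm x y = qm y x := by
  induction x using Finsupp.induction_linear with
  | zero => rw [qm_zero_left, qm_zero_right]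
  | add f g hf hg => rw [qm_add_left, qm_add_right, hf, hg]
  | single a c =>
    induction y using Finsupp.induction_linear with
    | zero => rw [qm_zero_left, qm_zero_right]
    | add f g hf hg => rw [qm_add_left, qm_add_right, hf, hg]
    | single b d =>
        rw [show (single a c : List Ω →₀ ℤ) = c • single a 1 by
            rw [Finsupp.smul_single, smul_eq_mul, mul_one],
          show (single b d : List Ω →₀ ℤ) = d • single b 1 by
            rw [Finsupp.smul_single, smul_eq_mul, mul_one],
          qm_smul_left, qm_smul_right, qm_smul_left, qm_smul_right,
          qm_single_single, qm_single_single, qsh_comm]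
        rw [smul_comm]

lemma qm_assoc (x y z : List Ω →₀ ℤ) : qm (qm x y) z = qm x (qm y z) := by
  induction x using Finsupp.induction_linear with
  | zero => rw [qm_zero_left, qm_zero_left, qm_zero_left]
  | add f g hf hg => rw [qm_add_left, qm_add_left, qm_add_left, hf, hg]
  | single a c =>
    induction y using Finsupp.induction_linear with
    | zero => simp [qm_zero_left, qm_zero_right]
    | add f g hf hg =>
        rw [qm_add_right, qm_add_left, qm_add_left, qm_add_right, hf, hg]
    | single b d =>
      induction z using Finsupp.induction_linear with
      | zero => simp [qm_zero_left, qm_zero_right]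
      | add f g hf hg => rw [qm_add_right, qm_add_right, qm_add_right, hf, hg]
      | single e k =>
          rw [show (single a c : List Ω →₀ ℤ) = c • single a 1 by
              rw [Finsupp.smul_single, smul_eq_mul, mul_one],
            show (single b d : List Ω →₀ ℤ) = d • single b 1 by
              rw [Finsupp.smul_single, smul_eq_mul, mul_one],
            show (single e k : List Ω →₀ ℤ) = k • single e 1 by
              rw [Finsupp.smul_single, smul_eq_mul, mul_one]]
          simp only [qm_smul_left, qm_smul_right]
          rw [qm_single_single, qm_single_single, qm_assoc_single]

lemma qm_mul_mul_comm (x y z w : List Ω →₀ ℤ) :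
    qm (qm x y) (qm z w) = qm (qm x z) (qm y w) := by
  rw [qm_assoc, qm_assoc, ← qm_assoc y z w, ← qm_assoc z y w, qm_comm y z]

end bilin
section tmdef
variable {Ω : Type*} [AddCommSemigroup Ω] [Inhabited Ω]

/-- basis product on the tensor square -/
noncomputable def tmf (p r : List Ω × List Ω) : (List Ω × List Ω) →₀ ℤ :=
  tens (qsh p.1 r.1) (qsh p.2 r.2)

/-- bilinear product on the tensor square -/
noncomputable def tm (X Y : (List Ω × List Ω) →₀ ℤ) : (List Ω × List Ω) →₀ ℤ :=
  lc (fun p => lc (fun r => tmf p r) Y) X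

lemma single_smul_one {α : Type*} (a : α) (c : ℤ) :
    (single a c : α →₀ ℤ) = c • single a 1 := by
  rw [Finsupp.smul_single, smul_eq_mul, mul_one]

lemma tm_single_left (p : List Ω × List Ω) (Y : (List Ω × List Ω) →₀ ℤ) :
    tm (single p 1) Y = lc (fun r => tmf p r) Y := by
  rw [tm, lc_single, one_smul]

lemma tm_single_right (X : (List Ω × List Ω) →₀ ℤ) (r : List Ω × List Ω) :
    tm X (single r 1) = lc (fun p => tmf p r) X := by
  rw [tm]; simp only [lc_single, one_smul]

lemma tm_add_left (X₁ X₂ Y : (List Ω × List Ω) →₀ ℤ) :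
    tm (X₁ + X₂) Y = tm X₁ Y + tm X₂ Y := by rw [tm, map_add]; rfl

lemma tm_add_right (X Y₁ Y₂ : (List Ω × List Ω) →₀ ℤ) :
    tm X (Y₁ + Y₂) = tm X Y₁ + tm X Y₂ := by
  rw [tm]; simp only [map_add, lc_add_fun]; rfl

lemma tm_smul_left (c : ℤ) (X Y : (List Ω × List Ω) →₀ ℤ) :
    tm (c • X) Y = c • tm X Y := by rw [tm, map_smul]; rfl

lemma tm_smul_right (c : ℤ) (X Y : (List Ω × List Ω) →₀ ℤ) :
    tm X (c • Y) = c • tm X Y := by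
  rw [tm]; simp only [map_smul, lc_smul_fun]; rfl

lemma tm_zero_left (Y : (List Ω × List Ω) →₀ ℤ) : tm 0 Y = 0 := by rw [tm, map_zero]
lemma tm_zero_right (X : (List Ω × List Ω) →₀ ℤ) : tm X 0 = 0 := by
  rw [tm]; simp only [map_zero]; exact lc_zero_fun X

lemma tm_lc_left {α : Type*} (f : α → (List Ω × List Ω) →₀ ℤ) (z : α →₀ ℤ)
    (Y : (List Ω × List Ω) →₀ ℤ) :
    tm (lc f z) Y = lc (fun a => tm (f a) Y) z := by
  rw [tm, map_lc]; rfl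

lemma tm_lc_right {α : Type*} (X : (List Ω × List Ω) →₀ ℤ) (f : α → (List Ω × List Ω) →₀ ℤ)
    (z : α →₀ ℤ) :
    tm X (lc f z) = lc (fun a => tm X (f a)) z := by
  rw [tm]
  simp only [map_lc]
  rw [lc_lc_swap]
  rfl

lemma tm_unit_left (Y : (List Ω × List Ω) →₀ ℤ) :
    tm (single (([], []) : List Ω × List Ω) 1) Y = Y := by
  rw [tm_single_left]
  have h : ∀ r : List Ω × List Ω, tmf (([], []) : List Ω × List Ω) r = single r 1 := by
    intro r
    rw [tmf]
    show tens (qsh [] r.1) (qsh [] r.2) = _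
    rw [qsh_nil_left, qsh_nil_left, tens_single_single]
  simp only [h]
  exact lc_id Y

lemma tm_unit_right (X : (List Ω × List Ω) →₀ ℤ) :
    tm X (single (([], []) : List Ω × List Ω) 1) = X := by
  rw [tm_single_right]
  have h : ∀ p : List Ω × List Ω, tmf p (([], []) : List Ω × List Ω) = single p 1 := by
    intro p
    rw [tmf]
    show tens (qsh p.1 []) (qsh p.2 []) = _
    rw [qsh_nil_right, qsh_nil_right, tens_single_single]
  simp only [h]
  exact lc_id X

lemma muf_tens (b : List Ω) (P Q : List Ω →₀ ℤ) :
    lc (muf b) (tens P Q)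
      = tens (mapDomain (fun m => wt b :: m) P) (lc (fun t => qsh b t) Q) := by
  rw [tens_eq P Q, map_lc]
  simp only [map_lc, lc_single, one_smul]
  conv_rhs => rw [tens_eq, lc_map]
  simp only [map_lc, lc_map_single]
  rfl

lemma tm_single_single (p r : List Ω × List Ω) :
    tm (single p 1) (single r 1) = tmf p r := by
  rw [tm_single_left, lc_single, one_smul]

lemma key1 (b b' : List Ω) (hb : b ≠ []) (hb' : b' ≠ []) (p r : List Ω × List Ω) :
    tm (muf b p) (muf b' r)
      = lc (muf b) (tm (single p 1) (muf b' r))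
      + lc (muf b') (tm (muf b p) (single r 1))
      + lc (fun u => lc (muf u) (tmf p r)) (qsh b b') := by
  have hL : tm (muf b p) (muf b' r)
      = tens (qsh (wt b :: p.1) (wt b' :: r.1)) (qm (qsh b p.2) (qsh b' r.2)) := by
    rw [muf, muf, tm, lc_map]
    simp only [lc_map, tmf]
    simp only [← tens_lc_right]
    rw [qm]
  have h1 : lc (muf b) (tm (single p (1:ℤ)) (muf b' r))
      = tens (mapDomain (fun m => wt b :: m) (qsh p.1 (wt b' :: r.1)))
          (qm (qsh b p.2) (qsh b' r.2)) := by
    rw [tm_single_left]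
    simp only [muf]
    rw [lc_map]
    simp only [tmf]
    rw [← tens_lc_right, muf_tens]
    rw [← qm_single_left, ← qm_single_left, ← qm_assoc, qm_single_single]
  have h2 : lc (muf b') (tm (muf b p) (single r (1:ℤ)))
      = tens (mapDomain (fun m => wt b' :: m) (qsh (wt b :: p.1) r.1))
          (qm (qsh b p.2) (qsh b' r.2)) := by
    rw [tm_single_right]
    simp only [muf]
    rw [lc_map]
    simp only [tmf]
    rw [← tens_lc_right, muf_tens]
    rw [← qm_single_left, ← qm_single_right,
      qm_comm (single b' (1:ℤ)), qm_assoc,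
      qm_comm (single r.2 (1:ℤ)) (single b' (1:ℤ)), qm_single_single]
  have h3 : lc (fun u => lc (muf u) (tmf p r)) (qsh b b')
      = tens (mapDomain (fun m => (wt b + wt b') :: m) (qsh p.1 r.1))
          (qm (qsh b p.2) (qsh b' r.2)) := by
    have e1 : lc (fun u => lc (muf u) (tmf p r)) (qsh b b')
        = lc (fun u => tens (mapDomain (fun m => (wt b + wt b') :: m) (qsh p.1 r.1))
            (lc (fun t => qsh u t) (qsh p.2 r.2))) (qsh b b') := by
      apply lc_congr
      intro u hu
      rw [tmf, muf_tens, wt_qsh b b' hb hb' u hu]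
    rw [e1, ← tens_lc_right]
    congr 1
    show qm (qsh b b') (qsh p.2 r.2) = _
    rw [← qm_single_single b b', ← qm_single_single p.2 r.2, qm_mul_mul_comm,
      qm_single_single, qm_single_single]
  rw [hL, h1, h2, h3, qsh_cons (wt b) (wt b') p.1 r.1, tens_add_left, tens_add_left]

lemma key (b b' : List Ω) (hb : b ≠ []) (hb' : b' ≠ [])
    (X Y : (List Ω × List Ω) →₀ ℤ) :
    tm (lc (muf b) X) (lc (muf b') Y)
      = lc (muf b) (tm X (lc (muf b') Y))
      + lc (muf b') (tm (lc (muf b) X) Y)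
      + lc (fun u => lc (muf u) (tm X Y)) (qsh b b') := by
  induction X using Finsupp.induction_linear with
  | zero => simp [tm_zero_left, lc_zero_fun]
  | add f g hf hg =>
      simp only [map_add, tm_add_left, lc_add_fun] at *
      rw [hf, hg]
      abel
  | single pp cX =>
    induction Y using Finsupp.induction_linear with
    | zero => simp [tm_zero_left, tm_zero_right, lc_zero_fun]
    | add f g hf hg =>
        simp only [map_add, tm_add_right, lc_add_fun] at *
        rw [hf, hg]
        abel
    | single rr cY =>
        rw [single_smul_one pp cX, single_smul_one rr cY]
        simp only [map_smul, tm_smul_left, tm_smul_right, lc_smul_fun, lc_single,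
          one_smul]
        rw [key1 b b' hb hb' pp rr]
        simp only [smul_add, tm_single_single]
end tmdef
section dec
variable {Ω : Type*} [AddCommSemigroup Ω] [Inhabited Ω]

lemma mapDomain_finsum {α β γ : Type*} (g : α → β) (s : Finset γ) (f : γ → α →₀ ℤ) :
    mapDomain g (∑ i ∈ s, f i) = ∑ i ∈ s, mapDomain g (f i) :=
  map_sum (Finsupp.mapDomain.addMonoidHom g) f s

/-- deconcatenation coproduct of a word -/
noncomputable def dec (w : List Ω) : (List Ω × List Ω) →₀ ℤ :=
  ∑ i ∈ Finset.range (w.length + 1), single ((w.take i, w.drop i) : List Ω × List Ω) 1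

/-- deconcatenations with nonempty first part -/
noncomputable def decP (w : List Ω) : (List Ω × List Ω) →₀ ℤ :=
  ∑ i ∈ Finset.range w.length, single ((w.take (i+1), w.drop (i+1)) : List Ω × List Ω) 1

lemma dec_nil : dec ([] : List Ω) = single (([], []) : List Ω × List Ω) 1 := by
  rw [dec]; simp

lemma dec_split (w : List Ω) : dec w = single ((([] : List Ω), w) : List Ω × List Ω) 1 + decP w := by
  rw [dec, decP, Finset.sum_range_succ', add_comm]
  simp

lemma decP_cons (a : Ω) (t : List Ω) :
    decP (a :: t)
      = mapDomain (fun p : List Ω × List Ω => ((a :: p.1, p.2) : List Ω × List Ω)) (dec t) := by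
  rw [decP, dec, mapDomain_finsum]
  apply Finset.sum_congr rfl
  intro i _
  rw [mapDomain_single]
  rw [List.take_succ_cons, List.drop_succ_cons]

lemma decP_support {w : List Ω} {p : List Ω × List Ω} (hp : p ∈ (decP w).support) :
    ∃ i < w.length, p = (w.take (i+1), w.drop (i+1)) := by
  classical
  rw [decP] at hp
  have := Finsupp.support_finset_sum hp
  rcases Finset.mem_biUnion.1 this with ⟨i, hi, hmem⟩
  exact ⟨i, Finset.mem_range.1 hi, mem_single_support' hmem⟩

lemma dec_qsh : ∀ (u v : List Ω), lc dec (qsh u v) = tm (dec u) (dec v)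
  | [], v => by
      rw [qsh_nil_left, lc_single, one_smul, dec_nil, tm_unit_left]
  | (a::t), [] => by
      rw [qsh_nil_right, lc_single, one_smul, dec_nil, tm_unit_right]
  | (a::t), (b::t') => by
      have IH1 := dec_qsh t (b::t')
      have IH2 := dec_qsh (a::t) t'
      have IH3 := dec_qsh t t'
      have dcons : ∀ (x : Ω) (s : List Ω),
          dec (x::s) = single ((([] : List Ω), x::s) : List Ω × List Ω) 1
            + mapDomain (fun p : List Ω × List Ω => ((x::p.1, p.2) : List Ω × List Ω)) (dec s) :=
        fun x s => by rw [dec_split, decP_cons]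
      have fold : ∀ (g : List Ω × List Ω → List Ω × List Ω) (z : List Ω →₀ ℤ),
          lc (fun s => mapDomain g (dec s)) z = mapDomain g (lc dec z) :=
        fun g z => (mapDomain_lc g dec z).symm
      rw [qsh_cons a b t t']
      simp only [map_add, lc_map]
      simp only [dcons, lc_add_fun, lc_map_single, fold]
      rw [IH1, IH2, IH3]
      simp only [dcons, tm_add_left, tm_add_right, tm, tmf, map_add, lc_single,
        one_smul, lc_map, lc_add_fun, mapDomain_lc, mapDomain_add, qsh_cons,
        qsh_nil_left, qsh_nil_right, tens_add_left, tens_single_left,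
        tens_map_fst, mapDomain_single, ← Finsupp.mapDomain_comp,
        Function.comp_def]
      abel
  termination_by u v => u.length + v.length

end dec
section final
variable {Ω : Type*} [AddCommSemigroup Ω] [Inhabited Ω]

/-- the map `b ⊗ r ↦ (‖b‖ ⊗ b) ⧢ Γ(r)` -/
noncomputable def xif (pp : List Ω × List Ω) : (List Ω × List Ω) →₀ ℤ :=
  lc (muf pp.1) (Gam pp.2)

lemma Gam_eq_xi (a : Ω) (t : List Ω) : Gam (a :: t) = lc xif (decP (a :: t)) := by
  rw [Gam_cons, decP, map_sum]
  apply Finset.sum_congr rfl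
  intro i _
  rw [lc_single, one_smul, List.take_succ_cons, List.drop_succ_cons]
  rfl

lemma decP_prop {a : Ω} {t : List Ω} {p : List Ω × List Ω}
    (hp : p ∈ (decP (a::t)).support) :
    p.1 ≠ [] ∧ p.2.length < (a::t).length := by
  rcases decP_support hp with ⟨i, hi, rfl⟩
  constructor
  · rw [List.take_succ_cons]; simp
  · simp only [List.length_drop]
    simp only [List.length_cons] at hi ⊢
    omega

lemma xi_tens (P Q : List Ω →₀ ℤ) :
    lc xif (tens P Q) = lc (fun m => lc (muf m) (lc Gam Q)) P := by
  rw [tens_eq, map_lc]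
  simp only [map_lc, lc_single, one_smul, xif]

set_option maxHeartbeats 1600000 in
theorem main_aux (w w' : List Ω) : lc Gam (qsh w w') = tm (Gam w) (Gam w') := by
  suffices H : ∀ (n : ℕ) (w w' : List Ω), w.length + w'.length ≤ n →
      lc Gam (qsh w w') = tm (Gam w) (Gam w') from H _ w w' le_rfl
  intro n
  induction n using Nat.strong_induction_on with
  | _ n IH =>
    intro w w' hlen
    match w, w' with
    | [], w' =>
        rw [qsh_nil_left, lc_single, one_smul, Gam_nil, tm_unit_left]
    | (a::t), [] =>
        rw [qsh_nil_right, lc_single, one_smul, Gam_nil, tm_unit_right]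
    | (a::t), (b::t') =>
      have IH' : ∀ u v : List Ω,
          u.length + v.length < (a::t).length + (b::t').length →
          lc Gam (qsh u v) = tm (Gam u) (Gam v) := fun u v h =>
        IH (u.length + v.length) (lt_of_lt_of_le h hlen) u v le_rfl
      -- Step A : all words in the support are nonempty
      have hsupp : ∀ z ∈ (qsh (a::t) (b::t')).support, z ≠ [] :=
        qsh_support_ne_nil_right (by simp)
      have hA : lc Gam (qsh (a::t) (b::t')) = lc xif (lc decP (qsh (a::t) (b::t'))) := by
        rw [map_lc]
        apply lc_congr
        intro z hz
        obtain ⟨c, m, rfl⟩ : ∃ c m, z = c :: m := by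
          cases z with
          | nil => exact absurd rfl (hsupp _ hz)
          | cons c m => exact ⟨c, m, rfl⟩
        exact Gam_eq_xi c m
      -- Step B : compute lc decP (qsh w w') from the deconcatenation morphism
      have hB : lc decP (qsh (a::t) (b::t'))
          = tm (single ((([]:List Ω), a::t) : List Ω × List Ω) 1) (decP (b::t'))
            + tm (decP (a::t)) (single ((([]:List Ω), b::t') : List Ω × List Ω) 1)
            + tm (decP (a::t)) (decP (b::t')) := by
        have h2 : lc dec (qsh (a::t) (b::t'))
            = mapDomain (fun u : List Ω => ((([]:List Ω), u) : List Ω × List Ω)) (qsh (a::t) (b::t'))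
              + lc decP (qsh (a::t) (b::t')) := by
          have e : lc dec (qsh (a::t) (b::t'))
              = lc (fun u => single ((([]:List Ω), u) : List Ω × List Ω) 1 + decP u)
                  (qsh (a::t) (b::t')) := lc_congr (fun u _ => dec_split u)
          rw [e, lc_add_fun, lc_map_single]
        have hT1 : tm (single ((([]:List Ω), a::t) : List Ω × List Ω) 1)
              (single ((([]:List Ω), b::t') : List Ω × List Ω) 1)
            = mapDomain (fun u : List Ω => ((([]:List Ω), u) : List Ω × List Ω))
                (qsh (a::t) (b::t')) := by
          rw [tm_single_single, tmf]
          show tens (qsh [] []) (qsh (a::t) (b::t')) = _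
          rw [qsh_nil_left, tens_single_left]
        have h3 : tm (dec (a::t)) (dec (b::t'))
            = mapDomain (fun u : List Ω => ((([]:List Ω), u) : List Ω × List Ω)) (qsh (a::t) (b::t'))
              + (tm (single ((([]:List Ω), a::t) : List Ω × List Ω) 1) (decP (b::t'))
                + tm (decP (a::t)) (single ((([]:List Ω), b::t') : List Ω × List Ω) 1)
                + tm (decP (a::t)) (decP (b::t'))) := by
          rw [dec_split (a::t), dec_split (b::t'), tm_add_left, tm_add_right, tm_add_right,
            hT1]
          abel
        have h4 := dec_qsh (a::t) (b::t')
        rw [h2, h3] at h4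
        exact add_left_cancel h4
      -- Step C : identify the three pieces
      have hP1 : lc xif (tm (single ((([]:List Ω), a::t) : List Ω × List Ω) 1) (decP (b::t')))
          = lc (fun q : List Ω × List Ω => lc (muf q.1) (tm (Gam (a::t)) (Gam q.2)))
              (decP (b::t')) := by
        rw [tm_single_left, map_lc]
        apply lc_congr
        intro q hq
        rw [tmf]
        show lc xif (tens (qsh [] q.1) (qsh (a::t) q.2)) = _
        rw [qsh_nil_left, tens_single_left, lc_map]
        simp only [xif]
        rw [← map_lc, IH' (a::t) q.2 (by
          have := (decP_prop hq).2
          simp only [List.length_cons] at this ⊢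
          omega)]
      have hP2 : lc xif (tm (decP (a::t)) (single ((([]:List Ω), b::t') : List Ω × List Ω) 1))
          = lc (fun p : List Ω × List Ω => lc (muf p.1) (tm (Gam p.2) (Gam (b::t'))))
              (decP (a::t)) := by
        rw [tm_single_right, map_lc]
        apply lc_congr
        intro p hp
        rw [tmf]
        show lc xif (tens (qsh p.1 []) (qsh p.2 (b::t'))) = _
        rw [qsh_nil_right, tens_single_left, lc_map]
        simp only [xif]
        rw [← map_lc, IH' p.2 (b::t') (by
          have := (decP_prop hp).2
          simp only [List.length_cons] at this ⊢
          omega)]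
      have hP3 : lc xif (tm (decP (a::t)) (decP (b::t')))
          = lc (fun p : List Ω × List Ω =>
              lc (fun q : List Ω × List Ω =>
                lc (fun m => lc (muf m) (tm (Gam p.2) (Gam q.2))) (qsh p.1 q.1))
                (decP (b::t'))) (decP (a::t)) := by
        rw [tm, map_lc]
        apply lc_congr
        intro p hp
        rw [map_lc]
        apply lc_congr
        intro q hq
        rw [tmf, xi_tens]
        apply lc_congr
        intro m _
        rw [IH' p.2 q.2 (by
          have h1 := (decP_prop hp).2
          have h2 := (decP_prop hq).2
          omega)]
      -- Step D : compute the right-hand side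
      have hfold2 : lc (fun q : List Ω × List Ω =>
              lc (muf q.1) (tm (Gam (a::t)) (Gam q.2))) (decP (b::t'))
          = lc (fun p : List Ω × List Ω =>
              lc (fun q : List Ω × List Ω =>
                lc (muf q.1) (tm (xif p) (Gam q.2))) (decP (b::t'))) (decP (a::t)) := by
        rw [lc_lc_swap]
        apply lc_congr
        intro q _
        rw [Gam_eq_xi a t, tm_lc_left, map_lc]
      have hR : tm (Gam (a::t)) (Gam (b::t'))
          = lc (fun p : List Ω × List Ω => lc (muf p.1) (tm (Gam p.2) (Gam (b::t'))))
              (decP (a::t))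
            + lc (fun q : List Ω × List Ω => lc (muf q.1) (tm (Gam (a::t)) (Gam q.2)))
                (decP (b::t'))
            + lc (fun p : List Ω × List Ω =>
                lc (fun q : List Ω × List Ω =>
                  lc (fun m => lc (muf m) (tm (Gam p.2) (Gam q.2))) (qsh p.1 q.1))
                  (decP (b::t'))) (decP (a::t)) := by
        have hpoint : ∀ p ∈ (decP (a::t)).support,
            tm (xif p) (lc xif (decP (b::t')))
              = lc (muf p.1) (tm (Gam p.2) (Gam (b::t')))
                + lc (fun q : List Ω × List Ω =>
                    lc (muf q.1) (tm (xif p) (Gam q.2))) (decP (b::t'))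
                + lc (fun q : List Ω × List Ω =>
                    lc (fun m => lc (muf m) (tm (Gam p.2) (Gam q.2))) (qsh p.1 q.1))
                    (decP (b::t')) := by
          intro p hp
          rw [tm_lc_right]
          have e : ∀ q ∈ (decP (b::t')).support,
              tm (xif p) (xif q)
                = lc (muf p.1) (tm (Gam p.2) (xif q))
                  + lc (muf q.1) (tm (xif p) (Gam q.2))
                  + lc (fun m => lc (muf m) (tm (Gam p.2) (Gam q.2))) (qsh p.1 q.1) := by
            intro q hq
            show tm (lc (muf p.1) (Gam p.2)) (lc (muf q.1) (Gam q.2)) = _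
            rw [key p.1 q.1 (decP_prop hp).1 (decP_prop hq).1]
            rfl
          rw [lc_congr e, lc_add_fun, lc_add_fun, Gam_eq_xi b t', tm_lc_right,
            map_lc]
        conv_lhs => rw [Gam_eq_xi a t, Gam_eq_xi b t']
        rw [tm_lc_left, lc_congr hpoint, lc_add_fun, lc_add_fun, ← hfold2]
      rw [hA, hB, map_add, map_add, hP1, hP2, hP3, hR]
      ac_rfl

lemma tm_eq_sum (X Y : (List Ω × List Ω) →₀ ℤ) :
    X.sum (fun p cp => Y.sum fun r cr => (cp * cr) • tmf p r) = tm X Y := by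
  rw [tm, Finsupp.linearCombination_apply]
  refine Finsupp.sum_congr fun p _ => ?_
  rw [Finsupp.linearCombination_apply, Finsupp.smul_sum]
  refine Finsupp.sum_congr fun r _ => ?_
  rw [smul_smul]

end final

/-- `Γ` is an algebra morphism for the quasi-shuffle product:
`Γ(w' ⧢ w'') = Γ(w') ⧢ Γ(w'')`, the product on the tensor square being the
componentwise quasi-shuffle. -/
theorem Gam_qsh_morphism {Ω : Type*} [AddCommSemigroup Ω] [Inhabited Ω]
    (w w' : List Ω) :
    (qsh w w').sum (fun u c => c • Gam u) =
      (Gam w).sum (fun p cp => (Gam w').sum fun r cr =>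
        (cp * cr) • tens (qsh p.1 r.1) (qsh p.2 r.2)) := by
  rw [lc_sum_eq Gam (qsh w w'), main_aux w w', ← tm_eq_sum]
  rfl
end

section
/- If N is a symmetrel mould (N^{w'⧢w''} = N^{w'}N^{w''} for all words, extending N linearly), then the diamond composition coincides with mould composition: M⋄N = M∘N for every mould M. -/
/-- The linear extension of a mould `N` to formal `ℤ`-linear combinations of
words. -/
def mext {Ω A : Type*} [CommRing A] (N : List Ω → A) (x : List Ω →₀ ℤ) : A :=
  x.sum fun w c => c • N w

/-- Mould composition
`(M ∘ N)^w = ∑_{s≥1} ∑_{w=w¹.⋯.wˢ} M^{‖w¹‖⋯‖wˢ‖} N^{w¹} ⋯ N^{wˢ}`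
(decompositions into nonempty words), with `(M ∘ N)^∅ = M^∅`. -/
noncomputable def mcomp {Ω A : Type*} [AddCommSemigroup Ω] [Inhabited Ω] [CommRing A]
    (M N : List Ω → A) : List Ω → A := fun w =>
  if w.isEmpty then M [] else
  ∑ c : Composition w.length,
    M ((w.splitWrtComposition c).map wt) * ((w.splitWrtComposition c).map N).prod

/-- Diamond composition, obtained by dualizing the internal coproduct `Γ`:
`(M ⋄ N)^w = ∑_{s≥1} ∑_{w=w¹.⋯.wˢ} M^{‖w¹‖⋯‖wˢ‖} N^{w¹ ⧢ ⋯ ⧢ wˢ}`,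
with `(M ⋄ N)^∅ = M^∅`. -/
noncomputable def mdiamond {Ω A : Type*} [AddCommSemigroup Ω] [Inhabited Ω] [CommRing A]
    (M N : List Ω → A) : List Ω → A := fun w =>
  if w.isEmpty then M [] else
  ∑ c : Composition w.length,
    M ((w.splitWrtComposition c).map wt) *
      mext N (qshFold (w.splitWrtComposition c))


lemma mext_eq_lc {Ω A : Type*} [CommRing A] (N : List Ω → A) (x : List Ω →₀ ℤ) :
    mext N x = Finsupp.linearCombination ℤ N x := by
  simp [mext, Finsupp.linearCombination_apply]

lemma mext_single {Ω A : Type*} [CommRing A] (N : List Ω → A) (w : List Ω) :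
    mext N (Finsupp.single w 1) = N w := by
  simp [mext_eq_lc]

lemma qsh_nil_right_s16 {Ω : Type*} [AddCommSemigroup Ω] (u : List Ω) :
    qsh u [] = Finsupp.single u 1 := by
  cases u <;> simp [qsh]

lemma mext_qshFold_cons {Ω A : Type*} [CommRing A] [AddCommSemigroup Ω]
    (N : List Ω → A) (hN : ∀ u v : List Ω, mext N (qsh u v) = N u * N v)
    (u : List Ω) (L : List (List Ω)) :
    mext N (qshFold (u :: L)) = N u * mext N (qshFold L) := by
  simp only [mext_eq_lc, qshFold]
  rw [map_finsuppSum]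
  simp only [map_zsmul]
  rw [Finsupp.linearCombination_apply, Finsupp.mul_sum]
  refine Finsupp.sum_congr fun v _ => ?_
  rw [← mext_eq_lc, hN u v, mul_smul_comm]

lemma mext_qshFold {Ω A : Type*} [CommRing A] [AddCommSemigroup Ω]
    (N : List Ω → A) (hN : ∀ u v : List Ω, mext N (qsh u v) = N u * N v)
    (u : List Ω) (L : List (List Ω)) :
    mext N (qshFold (u :: L)) = ((u :: L).map N).prod := by
  induction L generalizing u with
  | nil =>
      rw [mext_qshFold_cons N hN]
      have h1 : mext N (qshFold ([] : List (List Ω))) = N [] := by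
        simp [qshFold, mext_single]
      have h2 : N u * N [] = N u := by
        have := hN u []
        rw [qsh_nil_right_s16, mext_single] at this
        exact this.symm
      simp [h1, h2]
  | cons v L ih =>
      rw [mext_qshFold_cons N hN, ih]
      simp [mul_assoc]

/-- if `N` is symmetrel, then the diamond composition coincides
with mould composition: `M ⋄ N = M ∘ N` for every mould `M`. -/
theorem mdiamond_eq_mcomp_of_symmetrel {Ω A : Type*} [AddCommSemigroup Ω]
    [Inhabited Ω] [CommRing A] (M N : List Ω → A)
    (hN : ∀ u v : List Ω, mext N (qsh u v) = N u * N v) :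
    mdiamond M N = mcomp M N := by
  funext w
  unfold mdiamond mcomp
  by_cases hw : w.isEmpty
  · simp [hw]
  · simp only [hw, if_false]
    refine Finset.sum_congr rfl fun c _ => ?_
    rcases hp : w.splitWrtComposition c with _ | ⟨u, L⟩
    · exfalso
      have := w.flatten_splitWrtComposition c
      rw [hp] at this
      simp at this
      exact hw (by simp [this])
    · rw [mext_qshFold N hN]
end
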